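/- The Shapley value of player i equals SV(i) = -2 ∑_{R ∋ i, |R| odd} F(R)/|R|, where F is the Fourier transform of the value function and SV(i) = I^{SII}({i}) = ∑_{T ∋ i} I^M(T)/|T| with Möbius coefficients I^M(S) = (-2)^{|S|} ∑_{T ⊇ S} F(T). -/

import Mathlib

/-- The parity character indexed by subsets: `(-1)^{|S ∩ m|}`. -/
def sgn {n : ℕ} (S m : Finset (Fin n)) : ℝ := (-1) ^ (S ∩ m).card

open Finset


lemma key (m : ℕ) :
    ∑ k ∈ Finset.range (m+1), (m.choose k : ℝ) * ((-2)^(k+1) / (k+1)) =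
    ((-1)^(m+1) - 1) / (m+1) := by
  have step : ∀ k ∈ Finset.range (m+1),
      (m.choose k : ℝ) * ((-2)^(k+1) / (k+1)) =
      (((m+1).choose (k+1) : ℝ) * (-2)^(k+1)) / (m+1) := by
    intro k _
    have hc : ((m+1 : ℕ) : ℝ) * (m.choose k) = ((m+1).choose (k+1)) * (k+1) := by
      exact_mod_cast Nat.add_one_mul_choose_eq m k
    have hk1 : ((k:ℝ)+1) ≠ 0 := by positivity
    have hm1 : ((m:ℝ)+1) ≠ 0 := by positivity
    field_simp
    push_cast at hc ⊢
    linear_combination hc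
  rw [Finset.sum_congr rfl step, ← Finset.sum_div]
  congr 1
  have hb := add_pow (-2 : ℝ) 1 (m+1)
  simp only [one_pow, mul_one, neg_add_cancel] at hb
  have : ∑ k ∈ Finset.range (m+2), (-2:ℝ)^k * ((m+1).choose k) = (-1)^(m+1) := by
    have : ((-2:ℝ)+1) = -1 := by norm_num
    rw [this] at hb
    linarith [hb]
  rw [Finset.sum_range_succ'] at this
  simp at this
  calc ∑ k ∈ Finset.range (m+1), ((m+1).choose (k+1) : ℝ) * (-2)^(k+1)
      = ∑ k ∈ Finset.range (m+1), (-2:ℝ)^(k+1) * ((m+1).choose (k+1)) := by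
        exact Finset.sum_congr rfl fun k _ => by ring
    _ = (-1)^(m+1) - 1 := by linarith [this]

lemma subset_sum_aux {n : ℕ} (R : Finset (Fin n)) (i : Fin n) (hi : i ∈ R) :
    ∑ T ∈ Finset.univ.filter (fun T => i ∈ T ∧ T ⊆ R), (-2:ℝ)^T.card / T.card =
    if Odd R.card then (-2:ℝ) / R.card else 0 := by
  classical
  set m := R.card - 1 with hm
  have hR1 : 1 ≤ R.card := Finset.card_pos.mpr ⟨i, hi⟩
  have hRcard : R.card = m + 1 := by omega
  have hbij : ∑ T ∈ Finset.univ.filter (fun T => i ∈ T ∧ T ⊆ R), (-2:ℝ)^T.card / T.card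
      = ∑ s ∈ (R.erase i).powerset, (-2:ℝ)^(s.card+1) / (s.card+1) := by
    apply Finset.sum_nbij' (fun T => T.erase i) (fun s => insert i s)
    · intro T hT
      simp only [mem_filter, mem_univ, true_and] at hT
      simp only [mem_powerset]
      intro x hx
      simp only [mem_erase] at hx ⊢
      exact ⟨hx.1, hT.2 hx.2⟩
    · intro s hs
      simp only [mem_powerset] at hs
      simp only [mem_filter, mem_univ, true_and]
      refine ⟨Finset.mem_insert_self i s, ?_⟩
      intro x hx
      rcases Finset.mem_insert.mp hx with h | h
      · exact h ▸ hi
      · exact (Finset.erase_subset i R) (hs h)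
    · intro T hT
      simp only [mem_filter, mem_univ, true_and] at hT
      exact Finset.insert_erase hT.1
    · intro s hs
      simp only [mem_powerset] at hs
      exact Finset.erase_insert (fun h => (Finset.mem_erase.mp (hs h)).1 rfl)
    · intro T hT
      simp only [mem_filter, mem_univ, true_and] at hT
      rw [Finset.card_erase_of_mem hT.1]
      have h1 : 1 ≤ T.card := Finset.card_pos.mpr ⟨i, hT.1⟩
      have h2 : T.card - 1 + 1 = T.card := by omega
      rw [h2, Nat.cast_sub h1]
      norm_num
  rw [hbij]
  have hcardE : (R.erase i).card = m := by
    rw [Finset.card_erase_of_mem hi]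
  have hps : ∑ s ∈ (R.erase i).powerset, (-2:ℝ)^(s.card+1) / (s.card+1)
      = ∑ k ∈ Finset.range (m+1), (m.choose k : ℝ) * ((-2)^(k+1) / (k+1)) := by
    rw [Finset.sum_powerset, hcardE]
    apply Finset.sum_congr rfl
    intro k hk
    calc ∑ s ∈ (R.erase i).powersetCard k, (-2:ℝ)^(s.card+1)/(s.card+1)
        = ∑ _s ∈ (R.erase i).powersetCard k, (-2:ℝ)^(k+1)/(k+1) :=
          Finset.sum_congr rfl fun s hs => by
            rw [(Finset.mem_powersetCard.mp hs).2]
      _ = (m.choose k : ℝ) * ((-2)^(k+1) / (k+1)) := by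
          rw [Finset.sum_const, Finset.card_powersetCard, hcardE, nsmul_eq_mul]
  rw [hps, key, hRcard]
  rcases Nat.even_or_odd (m+1) with he | ho
  · rw [if_neg (by simpa using he), he.neg_one_pow]
    simp
  · rw [if_pos ho, ho.neg_one_pow]
    push_cast
    ring

/-- The Shapley value of player `i` in terms of Fourier coefficients. -/
theorem shapley_value_fourier {n : ℕ} (f F : Finset (Fin n) → ℝ)
    (hF : ∀ S, F S = (2 : ℝ)⁻¹ ^ n * ∑ m, sgn S m * f m)
    (IM : Finset (Fin n) → ℝ)
    (hIM : ∀ S, IM S = (-2 : ℝ) ^ S.card *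
      ∑ T ∈ Finset.univ.filter (fun T => S ⊆ T), F T)
    (i : Fin n) (SV : ℝ)
    (hSV : SV = ∑ T ∈ Finset.univ.filter (fun T => i ∈ T), IM T / T.card) :
    SV = -2 * ∑ R ∈ Finset.univ.filter (fun R => i ∈ R ∧ Odd R.card),
      F R / R.card := by
  classical
  have h1 : ∀ T : Finset (Fin n), IM T / T.card
      = ∑ R ∈ Finset.univ.filter (fun R => T ⊆ R), ((-2:ℝ)^T.card / T.card) * F R := by
    intro T
    rw [hIM T, Finset.mul_sum, Finset.sum_div]
    exact Finset.sum_congr rfl fun R _ => by ring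
  rw [hSV, Finset.sum_congr rfl fun T _ => h1 T]
  have hswap : (∑ T ∈ Finset.univ.filter (fun T => i ∈ T),
        ∑ R ∈ Finset.univ.filter (fun R => T ⊆ R), ((-2:ℝ)^T.card / T.card) * F R)
      = ∑ R : Finset (Fin n),
        (∑ T ∈ Finset.univ.filter (fun T => i ∈ T ∧ T ⊆ R), (-2:ℝ)^T.card / T.card) * F R := by
    simp only [Finset.sum_filter, Finset.sum_mul]
    conv_rhs => rw [Finset.sum_comm]
    apply Finset.sum_congr rfl
    intro T _
    by_cases h1 : i ∈ T
    · simp only [if_pos h1]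
      apply Finset.sum_congr rfl
      intro R _
      by_cases h2 : T ⊆ R <;> simp [h1, h2]
    · simp [h1]
  rw [hswap]
  have h3 : ∀ R : Finset (Fin n),
      (∑ T ∈ Finset.univ.filter (fun T => i ∈ T ∧ T ⊆ R), (-2:ℝ)^T.card / T.card) * F R
      = if i ∈ R ∧ Odd R.card then (-2:ℝ) * (F R / R.card) else 0 := by
    intro R
    by_cases hiR : i ∈ R
    · rw [subset_sum_aux R i hiR]
      by_cases ho : Odd R.card
      · rw [if_pos ho, if_pos ⟨hiR, ho⟩]
        ring
      · simp [hiR, ho]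
    · have hemp : Finset.univ.filter (fun T => i ∈ T ∧ T ⊆ R) = ∅ := by
        ext T
        simp only [Finset.mem_filter, Finset.mem_univ, true_and, Finset.notMem_empty,
          iff_false, not_and]
        intro hT hTR
        exact hiR (hTR hT)
      simp [hemp, hiR]
  rw [Finset.sum_congr rfl fun R _ => h3 R, ← Finset.sum_filter, Finset.mul_sum]
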